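/- For all integers m ≥ 0 and 0 ≤ l ≤ m, the quantity A_{l,m} = (l! · m! / 2^{m-l}) · Σ_{k=l}^{m} 2^k · C(2m-2k, m-k) · C(m+k, m) · C(k, l) is a positive integer. -/

import Mathlib

open Finset

section Aux
open Nat
lemma key_dbf (s : ℕ) : (2*s)! = 2^s * s ! * (2*s-1)‼ := by
  cases s with
  | zero => rfl
  | succ t =>
    have h1 : 2*(t+1) = (2*t+1)+1 := by ring
    rw [h1, Nat.factorial_eq_mul_doubleFactorial, ← h1, Nat.doubleFactorial_two_mul]
    congr 2

lemma key2 (k m : ℕ) (h : k ≤ m) :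
    m ! * ((2*(m-k)).choose (m-k)) = 2^(m-k) * (m.choose k * k ! * (2*(m-k)-1)‼) := by
  set s := m - k with hs
  have hsk : s ≤ 2*s := by omega
  have h1 : (2*s).choose s * (s ! * s !) = (2*s)! := by
    have := Nat.choose_mul_factorial_mul_factorial hsk
    have h2 : 2*s - s = s := by omega
    rw [h2] at this
    linarith [this]
  have h3 : m.choose k * k ! * s ! = m ! := by
    have := Nat.choose_mul_factorial_mul_factorial h
    rw [← hs] at this
    linarith [this]
  have hpos : 0 < s ! * s ! := Nat.mul_pos (Nat.factorial_pos s) (Nat.factorial_pos s)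
  apply Nat.eq_of_mul_eq_mul_right hpos
  calc m ! * ((2*s).choose s) * (s ! * s !) = m ! * ((2*s).choose s * (s ! * s !)) := by ring
    _ = m ! * (2*s)! := by rw [h1]
    _ = m ! * (2^s * s ! * (2*s-1)‼) := by rw [key_dbf]
    _ = (m.choose k * k ! * s !) * (2^s * s ! * (2*s-1)‼) := by rw [h3]
    _ = 2^s * (m.choose k * k ! * (2*s-1)‼) * (s ! * s !) := by ring

end Aux

noncomputable def A (l m : ℕ) : ℚ :=
  ((l.factorial * m.factorial : ℕ) : ℚ) / 2 ^ (m - l) *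
    ∑ k ∈ Finset.Icc l m,
      (2 : ℚ) ^ k * ((2 * m - 2 * k).choose (m - k)) * ((m + k).choose m) * (k.choose l)
open Nat in
theorem A_pos_integer (m l : ℕ) (h : l ≤ m) : ∃ n : ℕ, 0 < n ∧ A l m = n := by
  set u : ℕ → ℕ := fun k =>
    l ! * m.choose k * k ! * (2*(m-k)-1)‼ * (m+k).choose m * k.choose l with hu
  refine ⟨2^l * ∑ k ∈ Finset.Icc l m, u k, ?_, ?_⟩
  · apply Nat.mul_pos (pow_pos (by norm_num : (0:ℕ) < 2) l)
    apply Finset.sum_pos'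
    · intro i _; exact Nat.zero_le _
    · refine ⟨m, Finset.mem_Icc.mpr ⟨h, le_refl m⟩, ?_⟩
      simp only [hu]
      exact Nat.mul_pos (Nat.mul_pos (Nat.mul_pos (Nat.mul_pos (Nat.mul_pos
        (Nat.factorial_pos l) (Nat.choose_pos le_rfl)) (Nat.factorial_pos m))
        (Nat.doubleFactorial_pos _)) (Nat.choose_pos (Nat.le_add_right m m))) (Nat.choose_pos h)
  · rw [A, Finset.mul_sum]
    push_cast
    rw [Finset.mul_sum]
    apply Finset.sum_congr rfl
    intro k hk
    have hkm : k ≤ m := (Finset.mem_Icc.mp hk).2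
    have h2 : (2:ℚ)^(m-l) ≠ 0 := by positivity
    rw [div_mul_eq_mul_div, div_eq_iff h2]
    have hnat : l ! * m ! * (2^k * ((2*m-2*k).choose (m-k)) * ((m+k).choose m) * (k.choose l))
        = 2^l * (u k) * 2^(m-l) := by
      have hmm : 2*m - 2*k = 2*(m-k) := by omega
      rw [hmm, hu]
      have := key2 k m hkm
      calc l ! * m ! * (2^k * ((2*(m-k)).choose (m-k)) * ((m+k).choose m) * (k.choose l))
          = l ! * 2^k * (m ! * ((2*(m-k)).choose (m-k))) * ((m+k).choose m) * (k.choose l) := by ring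
        _ = l ! * 2^k * (2^(m-k) * (m.choose k * k ! * (2*(m-k)-1)‼)) * ((m+k).choose m) * (k.choose l) := by rw [this]
        _ = 2^k * 2^(m-k) * (l ! * (m.choose k * k ! * (2*(m-k)-1)‼) * ((m+k).choose m) * (k.choose l)) := by ring
        _ = 2^l * 2^(m-l) * (l ! * (m.choose k * k ! * (2*(m-k)-1)‼) * ((m+k).choose m) * (k.choose l)) := by
            have e1 : k + (m-k) = m := by omega
            have e2 : l + (m-l) = m := by omega
            rw [← pow_add, ← pow_add, e1, e2]
        _ = 2^l * (l ! * m.choose k * k ! * (2*(m-k)-1)‼ * (m+k).choose m * k.choose l) * 2^(m-l) := by ring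
    exact_mod_cast hnat
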